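/- Let k, n be natural numbers with 1 ≤ k < n, and let d := ⌊log₂(k+1)⌋. Then p(k,n) ≠ p(k+1,n) if and only if n ≡ k (mod 2^d). That is, the k-th and (k+1)-th most recently appended leaves of the U-MMB structure on n leaves lie in different mountains exactly when n ≡ k (mod 2^d). -/

import Mathlib

/-- Position (from 0 at the right) of the mountain of the U-MMB structure on `n` leaves
containing the `k`-th most recently appended leaf. -/
noncomputable def pos (k n : ℕ) : ℕ :=
  sInf {i : ℕ | k ≤ 2 ^ (i + 1) - 1 + (n + 1) % 2 ^ (i + 1)}

private lemma ummb_f_mono (n : ℕ) :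
    Monotone (fun i => 2 ^ (i + 1) - 1 + (n + 1) % 2 ^ (i + 1)) := by
  apply monotone_nat_of_le_succ
  intro i
  have h1 : (n + 1) % 2 ^ (i + 1) < 2 ^ (i + 1) := Nat.mod_lt _ (Nat.two_pow_pos _)
  have h2 : (1:ℕ) ≤ 2 ^ (i + 1) := Nat.one_le_two_pow
  have h3 : 2 ^ (i + 1 + 1) = 2 * 2 ^ (i + 1) := by ring
  omega

private lemma ummb_nonempty (k n : ℕ) :
    {i : ℕ | k ≤ 2 ^ (i + 1) - 1 + (n + 1) % 2 ^ (i + 1)}.Nonempty := by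
  refine ⟨k, ?_⟩
  have : k < 2 ^ k := Nat.lt_two_pow_self
  have h2 : 2 ^ k ≤ 2 ^ (k + 1) := Nat.pow_le_pow_right (by norm_num) (by omega)
  simp only [Set.mem_setOf_eq]
  omega

theorem ummb_different_mountains (k n : ℕ) (hk : 1 ≤ k) (hkn : k < n)
    (d : ℕ) (hd : d = Nat.log 2 (k + 1)) :
    pos k n ≠ pos (k + 1) n ↔ n ≡ k [MOD 2 ^ d] := by
  set f : ℕ → ℕ := fun i => 2 ^ (i + 1) - 1 + (n + 1) % 2 ^ (i + 1) with hf
  have hmono := ummb_f_mono n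
  have hmem : ∀ m, f (pos m n) ≥ m := fun m => Nat.sInf_mem (ummb_nonempty m n)
  have hle : ∀ m i, m ≤ f i → pos m n ≤ i := fun m i h => Nat.sInf_le h
  have hd2 : 2 ^ d ≤ k + 1 := hd ▸ Nat.pow_log_le_self 2 (by omega)
  have hd3 : k + 1 < 2 ^ (d + 1) := hd ▸ Nat.lt_pow_succ_log_self (by norm_num) (k + 1)
  have hd1 : 1 ≤ d := by
    rw [hd]
    have : (2:ℕ) ^ 1 ≤ k + 1 := by omega
    exact (Nat.le_log_iff_pow_le (by norm_num) (by omega)).mpr this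
  -- step: pos k n ≠ pos (k+1) n ↔ f (pos k n) = k
  have step1 : pos k n ≠ pos (k + 1) n ↔ f (pos k n) = k := by
    constructor
    · intro h
      by_contra hne
      have h1 : k + 1 ≤ f (pos k n) := by have := hmem k; omega
      have h2 : pos (k + 1) n ≤ pos k n := hle _ _ h1
      have h3 : pos k n ≤ pos (k + 1) n := hle _ _ (by have := hmem (k + 1); omega)
      omega
    · intro h hne
      have := hmem (k + 1)
      rw [← hne] at this
      omega
  rw [step1]
  -- step: f (pos k n) = k ↔ (n+1) % 2^d + 2^d = k + 1
  have step2 : f (pos k n) = k ↔ (n + 1) % 2 ^ d + 2 ^ d = k + 1 := by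
    constructor
    · intro h
      set p := pos k n with hp
      have h1 : (1:ℕ) ≤ 2 ^ (p + 1) := Nat.one_le_two_pow
      have h2 : (n + 1) % 2 ^ (p + 1) < 2 ^ (p + 1) :=
        Nat.mod_lt _ (Nat.two_pow_pos _)
      have h3 : (n + 1) % 2 ^ (p + 1) + 2 ^ (p + 1) = k + 1 := by
        simp only [hf] at h; omega
      have h4 : 2 ^ (p + 1) ≤ k + 1 := by omega
      have h5 : k + 1 < 2 ^ (p + 1 + 1) := by
        have : 2 ^ (p + 1 + 1) = 2 * 2 ^ (p + 1) := by ring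
        omega
      have hpd : p + 1 = d := by
        rw [hd]
        exact (Nat.log_eq_of_pow_le_of_lt_pow h4 h5).symm
      rw [hpd] at h3
      exact h3
    · intro h
      have hfd : f (d - 1) = k := by
        have hsub : d - 1 + 1 = d := by omega
        simp only [hf, hsub]
        have h1 : (1:ℕ) ≤ 2 ^ d := Nat.one_le_two_pow
        omega
      have h1 : pos k n ≤ d - 1 := hle _ _ (by omega)
      have h2 : f (pos k n) ≤ f (d - 1) := hmono h1
      rw [hfd] at h2
      have := hmem k
      omega
  rw [step2]
  -- step: arithmetic ↔ n ≡ k [MOD 2^d]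
  have h2d : (1:ℕ) ≤ 2 ^ d := Nat.one_le_two_pow
  have hdd : 2 ^ (d + 1) = 2 * 2 ^ d := by ring
  have hkmod : (k + 1) % 2 ^ d = k + 1 - 2 ^ d := by
    rw [Nat.mod_eq_sub_mod hd2]
    exact Nat.mod_eq_of_lt (by omega)
  constructor
  · intro h
    have h1 : (n + 1) % 2 ^ d = (k + 1) % 2 ^ d := by omega
    have h2 : n + 1 ≡ k + 1 [MOD 2 ^ d] := h1
    exact (Nat.ModEq.add_right_cancel' 1 h2)
  · intro h
    have h2 : n + 1 ≡ k + 1 [MOD 2 ^ d] := h.add_right 1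
    have h1 : (n + 1) % 2 ^ d = (k + 1) % 2 ^ d := h2
    omega
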